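/- If n ≡ 2 (mod 4), then the matching persistency of K_n is at most n/2: there exist n/2 pairwise edge-disjoint perfect matchings of K_n whose removal leaves a graph with no perfect matching. -/

import Mathlib

/-- The matching persistency of a graph `G`: the size of the smallest set of pairwise
edge-disjoint perfect matchings whose removal from `G` leaves a graph with no
perfect matching. -/
noncomputable def matchingPersistency {V : Type} (G : SimpleGraph V) : ℕ :=
  sInf {k : ℕ | ∃ 𝓜 : Finset G.Subgraph, 𝓜.card = k ∧
    (∀ M ∈ 𝓜, M.IsPerfectMatching) ∧
    ((𝓜 : Set G.Subgraph).Pairwise fun M N => Disjoint M.edgeSet N.edgeSet) ∧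
    ¬ ∃ M' : (G.deleteEdges (⋃ M ∈ 𝓜, SimpleGraph.Subgraph.edgeSet M)).Subgraph,
        M'.IsPerfectMatching}

namespace MPaux

def crossAdj (m k : ℕ) {n : ℕ} (v w : Fin n) : Prop :=
  (v.val < m ∧ m ≤ w.val ∧ (v.val + k) % m = w.val - m) ∨
  (w.val < m ∧ m ≤ v.val ∧ (w.val + k) % m = v.val - m)

def Mgraph (n m k : ℕ) : (⊤ : SimpleGraph (Fin n)).Subgraph where
  verts := Set.univ
  Adj := crossAdj m k
  adj_sub := by
    rintro v w (⟨h1, h2, _⟩ | ⟨h1, h2, _⟩) <;>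
    · simp only [SimpleGraph.top_adj]
      intro h
      subst h
      omega
  edge_vert := fun _ => Set.mem_univ _
  symm := by
    refine ⟨?_⟩
    rintro v w (h | h)
    · exact Or.inr h
    · exact Or.inl h

lemma cancel_right {m a b k : ℕ} (ha : a < m) (hb : b < m)
    (h : (a + k) % m = (b + k) % m) : a = b := by
  have h2 := Nat.ModEq.add_right_cancel' k (h : a + k ≡ b + k [MOD m])
  rwa [Nat.ModEq, Nat.mod_eq_of_lt ha, Nat.mod_eq_of_lt hb] at h2

lemma cancel_left {m k l a : ℕ} (hk : k < m) (hl : l < m)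
    (h : (a + k) % m = (a + l) % m) : k = l := by
  have h2 := Nat.ModEq.add_left_cancel' a (h : a + k ≡ a + l [MOD m])
  rwa [Nat.ModEq, Nat.mod_eq_of_lt hk, Nat.mod_eq_of_lt hl] at h2

lemma exists_unique_partner {n m k : ℕ} (hn : n = 2 * m) (hk : k < m) (v : Fin n) :
    ∃! w : Fin n, crossAdj m k v w := by
  have hm : 0 < m := by omega
  by_cases hv : v.val < m
  · have hlt : (v.val + k) % m < m := Nat.mod_lt _ hm
    refine ⟨⟨m + (v.val + k) % m, by omega⟩, Or.inl ⟨hv, by simp, by simp⟩, ?_⟩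
    rintro y (⟨_, h2, h3⟩ | ⟨_, h2, _⟩)
    · apply Fin.ext
      simp only
      omega
    · omega
  · have ht : v.val - m < m := by omega
    have hlt : (v.val - m + (m - k)) % m < m := Nat.mod_lt _ hm
    have hadj : ((v.val - m + (m - k)) % m + k) % m = v.val - m := by
      calc ((v.val - m + (m - k)) % m + k) % m
          = (v.val - m + (m - k) + k) % m := Nat.mod_add_mod _ _ _
        _ = (v.val - m + m) % m := by congr 1; omega
        _ = (v.val - m) % m := Nat.add_mod_right _ _
        _ = v.val - m := Nat.mod_eq_of_lt ht
    refine ⟨⟨(v.val - m + (m - k)) % m, by omega⟩, Or.inr ⟨hlt, by omega, hadj⟩, ?_⟩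
    rintro y (⟨h1, _, _⟩ | ⟨h1, _, h3⟩)
    · omega
    · apply Fin.ext
      simp only
      exact cancel_right h1 hlt (by rw [h3, hadj])

lemma Mgraph_pm {n m k : ℕ} (hn : n = 2 * m) (hk : k < m) :
    (Mgraph n m k).IsPerfectMatching :=
  ⟨fun v _ => exists_unique_partner hn hk v, fun v => Set.mem_univ v⟩

lemma eq_of_mem_edgeSets {n m k l : ℕ} (hk : k < m) (hl : l < m) (e : Sym2 (Fin n))
    (hek : e ∈ (Mgraph n m k).edgeSet) (hel : e ∈ (Mgraph n m l).edgeSet) : k = l := by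
  induction e using Sym2.ind with
  | _ v w =>
    rw [SimpleGraph.Subgraph.mem_edgeSet] at hek hel
    rcases hek with ⟨h1, h2, h3⟩ | ⟨h1, h2, h3⟩ <;>
      rcases hel with ⟨g1, g2, g3⟩ | ⟨g1, g2, g3⟩
    · exact cancel_left hk hl (by rw [h3, g3])
    · omega
    · omega
    · exact cancel_left hk hl (by rw [h3, g3])

lemma cross_covered {n m : ℕ} (hn : n = 2 * m) (v w : Fin n)
    (hv : v.val < m) (hw : m ≤ w.val) : ∃ k, k < m ∧ crossAdj m k v w := by
  have hm : 0 < m := by omega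
  have hw2 : w.val - m < m := by omega
  refine ⟨(w.val - m + (m - v.val)) % m, Nat.mod_lt _ hm, Or.inl ⟨hv, hw, ?_⟩⟩
  calc (v.val + (w.val - m + (m - v.val)) % m) % m
      = (v.val + (w.val - m + (m - v.val))) % m := Nat.add_mod_mod _ _ _
    _ = (w.val - m + m) % m := by congr 1; omega
    _ = (w.val - m) % m := Nat.add_mod_right _ _
    _ = w.val - m := Nat.mod_eq_of_lt hw2

lemma Mgraph_injOn {n m : ℕ} (hn : n = 2 * m) (hm : 0 < m) :
    Set.InjOn (Mgraph n m) (Finset.range m) := by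
  intro k hk l hl h
  rw [Finset.coe_range, Set.mem_Iio] at hk hl
  have hn0 : 0 < n := by omega
  obtain ⟨w, hw, -⟩ := exists_unique_partner hn hk (⟨0, hn0⟩ : Fin n)
  have hek : s((⟨0, hn0⟩ : Fin n), w) ∈ (Mgraph n m k).edgeSet :=
    SimpleGraph.Subgraph.mem_edgeSet.mpr hw
  have hel : s((⟨0, hn0⟩ : Fin n), w) ∈ (Mgraph n m l).edgeSet := by
    rw [← h]; exact hek
  exact eq_of_mem_edgeSets hk hl _ hek hel

end MPaux

open MPaux in
/-- If `n ≡ 2 (mod 4)`, then the matching persistency of `K_n` is at most `n/2`: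
there exist `n/2` pairwise edge-disjoint perfect matchings of `K_n` whose removal leaves a
graph with no perfect matching. -/
theorem mp_complete_le_half (n : ℕ) (hn : n % 4 = 2) :
    (∃ 𝓜 : Finset (⊤ : SimpleGraph (Fin n)).Subgraph, 𝓜.card = n / 2 ∧
      (∀ M ∈ 𝓜, M.IsPerfectMatching) ∧
      ((𝓜 : Set (⊤ : SimpleGraph (Fin n)).Subgraph).Pairwise
        fun M N => Disjoint M.edgeSet N.edgeSet) ∧
      ¬ ∃ M' : ((⊤ : SimpleGraph (Fin n)).deleteEdges
            (⋃ M ∈ 𝓜, SimpleGraph.Subgraph.edgeSet M)).Subgraph,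
          M'.IsPerfectMatching) ∧
    matchingPersistency (⊤ : SimpleGraph (Fin n)) ≤ n / 2 := by
  classical
  set m := n / 2 with hmdef
  have h2 : n = 2 * m := by omega
  have hmpos : 0 < m := by omega
  have hmodd : m % 2 = 1 := by omega
  set 𝓜 := (Finset.range m).image (Mgraph n m) with h𝓜
  have hcard : 𝓜.card = m := by
    rw [h𝓜, Finset.card_image_of_injOn (Mgraph_injOn h2 hmpos), Finset.card_range]
  have hpm : ∀ M ∈ 𝓜, M.IsPerfectMatching := by
    intro M hM
    simp only [h𝓜, Finset.mem_image, Finset.mem_range] at hM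
    obtain ⟨k, hk, rfl⟩ := hM
    exact Mgraph_pm h2 hk
  have hpw : (↑𝓜 : Set (⊤ : SimpleGraph (Fin n)).Subgraph).Pairwise
      fun M N => Disjoint M.edgeSet N.edgeSet := by
    intro M hM N hN hMN
    simp only [h𝓜, Finset.coe_image, Finset.coe_range, Set.mem_image, Set.mem_Iio] at hM hN
    obtain ⟨k, hk, rfl⟩ := hM
    obtain ⟨l, hl, rfl⟩ := hN
    rw [Set.disjoint_left]
    intro e hek hel
    exact hMN (by rw [eq_of_mem_edgeSets hk hl e hek hel])
  have hcrossE : ∀ v w : Fin n, v.val < m → m ≤ w.val →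
      s(v, w) ∈ ⋃ M ∈ 𝓜, SimpleGraph.Subgraph.edgeSet M := by
    intro v w hv hw
    obtain ⟨k, hk, hadj⟩ := cross_covered h2 v w hv hw
    exact Set.mem_iUnion₂.mpr ⟨Mgraph n m k,
      Finset.mem_image_of_mem _ (Finset.mem_range.mpr hk),
      SimpleGraph.Subgraph.mem_edgeSet.mpr hadj⟩
  have hno : ¬ ∃ M' : ((⊤ : SimpleGraph (Fin n)).deleteEdges
        (⋃ M ∈ 𝓜, SimpleGraph.Subgraph.edgeSet M)).Subgraph, M'.IsPerfectMatching := by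
    rintro ⟨M', hM'⟩
    have hpart : ∀ v w : Fin n, M'.Adj v w → v.val < m → w.val < m := by
      intro v w hvw hv
      by_contra hw
      have hadj := M'.adj_sub hvw
      rw [SimpleGraph.deleteEdges_adj] at hadj
      exact hadj.2 (hcrossE v w hv (by omega))
    let M'' : ((⊤ : SimpleGraph (Fin n)).deleteEdges
        (⋃ M ∈ 𝓜, SimpleGraph.Subgraph.edgeSet M)).Subgraph :=
      { verts := {v | v.val < m}
        Adj := fun v w => M'.Adj v w ∧ v.val < m ∧ w.val < m
        adj_sub := fun h => M'.adj_sub h.1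
        edge_vert := fun h => h.2.1
        symm := ⟨fun v w h => ⟨h.1.symm, h.2.2, h.2.1⟩⟩ }
    have hM''m : M''.IsMatching := by
      intro v hv
      obtain ⟨w, hw, huniq⟩ := hM'.1 (hM'.2 v)
      have hvm : v.val < m := hv
      have hwm : w.val < m := hpart v w hw hvm
      exact ⟨w, ⟨hw, hvm, hwm⟩, fun y hy => huniq y hy.1⟩
    haveI : Fintype M''.verts := Set.Finite.fintype (Set.toFinite _)
    have heven := hM''m.even_card
    have hA : M''.verts.toFinset = Finset.univ.filter (fun v : Fin n => v.val < m) := by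
      ext v
      simp [M'']
    have hAcard : (Finset.univ.filter (fun v : Fin n => v.val < m)).card = m := by
      apply Finset.card_eq_of_bijective (fun i hi => (⟨i, by omega⟩ : Fin n))
      · intro v hv
        rw [Finset.mem_filter] at hv
        exact ⟨v.val, hv.2, Fin.ext rfl⟩
      · intro i hi
        rw [Finset.mem_filter]
        exact ⟨Finset.mem_univ _, hi⟩
      · intro i j hi hj hij
        exact congrArg Fin.val hij
    rw [hA, hAcard] at heven
    obtain ⟨p, hp⟩ := heven
    omega
  exact ⟨⟨𝓜, hcard, hpm, hpw, hno⟩, Nat.sInf_le ⟨𝓜, hcard, hpm, hpw, hno⟩⟩
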